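/- Let Ω be a two-sided admissible domain. The Neumann–Poincaré operator K_{∂Ω} satisfies: there exists c ∈ (0,1), depending only on the norms of the Dirichlet harmonic extension operators Ė_Ω and Ė_{Ω̄ᶜ}, such that for all f in the trace space, (1−c)‖f‖_{V⁻¹} ≤ ‖(±½ I + K_{∂Ω}) f‖_{V⁻¹} ≤ c‖f‖_{V⁻¹}, where ‖f‖²_{V⁻¹} = ⟨V_{∂Ω}^{-1} f, f⟩. Consequently the Neumann series Σ_{ℓ≥0} (±½ I + K_{∂Ω})^ℓ converges in operator norm with respect to ‖·‖_{V⁻¹}. -/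

import Mathlib

open Filter Topology RealInnerProductSpace

noncomputable section

universe u v w

/-- The whole-space trace norm `‖f‖_{Tr} = ‖f‖_{V⁻¹} = inf {‖v‖_{Ḣ¹(ℝⁿ)} : Tr v = f}`,
`Ḣ¹(ℝⁿ)` being realized as pairs with matching traces and `‖(u,v)‖² = ‖u‖² + ‖v‖²`. -/
def traceNormV {Hi He B : Type*} [NormedAddCommGroup Hi] [InnerProductSpace ℝ Hi]
    [NormedAddCommGroup He] [InnerProductSpace ℝ He]
    [AddCommGroup B] [Module ℝ B] (Tri : Hi →ₗ[ℝ] B) (Tre : He →ₗ[ℝ] B) (f : B) : ℝ :=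
  sInf {r | ∃ (u : Hi) (v : He), Tri u = f ∧ Tre v = f ∧
    r = Real.sqrt (‖u‖ ^ 2 + ‖v‖ ^ 2)}

/-- Operator norm on `𝔅(∂Ω)` subordinate to the norm `‖·‖_{V⁻¹}`. -/
def opNormV {Hi He B : Type*} [NormedAddCommGroup Hi] [InnerProductSpace ℝ Hi]
    [NormedAddCommGroup He] [InnerProductSpace ℝ He]
    [AddCommGroup B] [Module ℝ B] (Tri : Hi →ₗ[ℝ] B) (Tre : He →ₗ[ℝ] B)
    (A : B →ₗ[ℝ] B) : ℝ :=
  sInf {C | 0 ≤ C ∧ ∀ f : B, traceNormV Tri Tre (A f) ≤ C * traceNormV Tri Tre f}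

/-- The operator norm of a Dirichlet harmonic extension operator `u ↦ (u, e u)`. -/
def extNorm {X Y : Type*} [NormedAddCommGroup X] [NormedAddCommGroup Y]
    [Module ℝ X] [Module ℝ Y] (e : X →ₗ[ℝ] Y) : ℝ :=
  sInf {C | 0 ≤ C ∧ ∀ u : X, Real.sqrt (‖u‖ ^ 2 + ‖e u‖ ^ 2) ≤ C * ‖u‖}


namespace Stmt17Aux

section Basic
variable {Hi : Type u} {He : Type v} {B : Type w}
  [NormedAddCommGroup Hi] [InnerProductSpace ℝ Hi]
  [NormedAddCommGroup He] [InnerProductSpace ℝ He]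
  [AddCommGroup B] [Module ℝ B]
  (Tri : Hi →ₗ[ℝ] B) (Tre : He →ₗ[ℝ] B)

lemma traceNormV_nonneg (f : B) : 0 ≤ traceNormV Tri Tre f :=
  Real.sInf_nonneg (by rintro r ⟨u, v, -, -, rfl⟩; positivity)

lemma traceNormV_le (f : B) (u : Hi) (v : He) (hu : Tri u = f) (hv : Tre v = f) :
    traceNormV Tri Tre f ≤ Real.sqrt (‖u‖ ^ 2 + ‖v‖ ^ 2) :=
  csInf_le ⟨0, by rintro r ⟨u', v', -, -, rfl⟩; positivity⟩ ⟨u, v, hu, hv, rfl⟩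

lemma norm_min {u u' : Hi} (hu : u ∈ (LinearMap.ker Tri)ᗮ) (h : Tri u = Tri u') :
    ‖u‖ ^ 2 ≤ ‖u'‖ ^ 2 := by
  have hk : u' - u ∈ LinearMap.ker Tri := by
    simp [LinearMap.mem_ker, map_sub, h]
  have horth : ⟪u' - u, u⟫ = 0 := (Submodule.mem_orthogonal _ _).mp hu _ hk
  have horth' : ⟪u, u' - u⟫ = 0 := by rwa [real_inner_comm] at horth
  have hsum : ‖u'‖ ^ 2 = ‖u‖ ^ 2 + ‖u' - u‖ ^ 2 := by
    have h2 := norm_add_sq_real u (u' - u)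
    simp only [add_sub_cancel] at h2
    rw [h2, horth']; ring
  nlinarith [sq_nonneg ‖u' - u‖]

lemma traceNormV_eq (f : B) (u : Hi) (v : He)
    (hu' : u ∈ (LinearMap.ker Tri)ᗮ) (hv' : v ∈ (LinearMap.ker Tre)ᗮ)
    (hu : Tri u = f) (hv : Tre v = f) :
    traceNormV Tri Tre f = Real.sqrt (‖u‖ ^ 2 + ‖v‖ ^ 2) := by
  refine le_antisymm (traceNormV_le Tri Tre f u v hu hv) ?_
  refine le_csInf ⟨_, u, v, hu, hv, rfl⟩ ?_
  rintro r ⟨u', v', hu1, hv1, rfl⟩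
  refine Real.sqrt_le_sqrt ?_
  have h1 : ‖u‖ ^ 2 ≤ ‖u'‖ ^ 2 := norm_min Tri hu' (by rw [hu, hu1])
  have h2 : ‖v‖ ^ 2 ≤ ‖v'‖ ^ 2 := norm_min Tre hv' (by rw [hv, hv1])
  linarith

end Basic

lemma l2tri {p q r s : ℝ} (hp : 0 ≤ p) (hq : 0 ≤ q) (hr : 0 ≤ r) (hs : 0 ≤ s) :
    Real.sqrt ((p + r) ^ 2 + (q + s) ^ 2) ≤
      Real.sqrt (p ^ 2 + q ^ 2) + Real.sqrt (r ^ 2 + s ^ 2) := by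
  set S := Real.sqrt (p ^ 2 + q ^ 2) with hS
  set T := Real.sqrt (r ^ 2 + s ^ 2) with hT
  have hS0 : 0 ≤ S := Real.sqrt_nonneg _
  have hT0 : 0 ≤ T := Real.sqrt_nonneg _
  have hS2 : S ^ 2 = p ^ 2 + q ^ 2 := Real.sq_sqrt (by positivity)
  have hT2 : T ^ 2 = r ^ 2 + s ^ 2 := Real.sq_sqrt (by positivity)
  have hcs : p * r + q * s ≤ S * T := by
    nlinarith [sq_nonneg (p * s - q * r), sq_nonneg (S * T - (p * r + q * s)),
      mul_nonneg hS0 hT0, mul_nonneg (mul_nonneg hp hr) (mul_nonneg hq hs)]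
  have hmain : (p + r) ^ 2 + (q + s) ^ 2 ≤ (S + T) ^ 2 := by nlinarith
  calc Real.sqrt ((p + r) ^ 2 + (q + s) ^ 2) ≤ Real.sqrt ((S + T) ^ 2) :=
        Real.sqrt_le_sqrt hmain
    _ = S + T := Real.sqrt_sq (by positivity)

lemma extNorm_spec {X : Type u} {Y : Type v} [NormedAddCommGroup X] [NormedAddCommGroup Y]
    [Module ℝ X] [Module ℝ Y] (e : X →ₗ[ℝ] Y)
    (h : ∃ C : ℝ, 0 ≤ C ∧ ∀ u : X, Real.sqrt (‖u‖ ^ 2 + ‖e u‖ ^ 2) ≤ C * ‖u‖) :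
    0 ≤ extNorm e ∧ ∀ u : X, Real.sqrt (‖u‖ ^ 2 + ‖e u‖ ^ 2) ≤ extNorm e * ‖u‖ := by
  constructor
  · exact Real.sInf_nonneg fun C hC => hC.1
  · intro u
    rcases eq_or_ne ‖u‖ 0 with h0 | h0
    · have hu : u = 0 := norm_eq_zero.mp h0
      simp [extNorm, hu]
    · have hpos : 0 < ‖u‖ := (norm_nonneg u).lt_of_ne (Ne.symm h0)
      rw [← div_le_iff₀ hpos]
      refine le_csInf h ?_
      intro C hC
      rw [div_le_iff₀ hpos]
      exact hC.2 u

lemma hFle_scalar {a b m x1 x2 y1 y2 F : ℝ} (hma : a ^ 2 ≤ m) (hmb : b ^ 2 ≤ m)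
    (hax : x1 ^ 2 + x2 ^ 2 ≤ a ^ 2 * x1 ^ 2) (hby : y1 ^ 2 + y2 ^ 2 ≤ b ^ 2 * y1 ^ 2)
    (hFsq : F ^ 2 = x2 ^ 2 + y2 ^ 2 + 3 * x1 ^ 2 + 3 * y1 ^ 2) :
    F ^ 2 ≤ (m + 2) * (x1 ^ 2 + y1 ^ 2) := by
  nlinarith [mul_le_mul_of_nonneg_right hma (sq_nonneg x1),
    mul_le_mul_of_nonneg_right hmb (sq_nonneg y1)]

lemma core_ineq {x1 x2 y1 y2 m F : ℝ} (hm0 : 0 ≤ m)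
    (hFsq : F ^ 2 = x2 ^ 2 + y2 ^ 2 + 3 * x1 ^ 2 + 3 * y1 ^ 2)
    (h1 : F ^ 2 ≤ (m + 2) * (x1 ^ 2 + y1 ^ 2)) :
    (m + 3) * (y2 ^ 2 + y1 ^ 2) ≤ (m + 1) * F ^ 2 := by
  have hstep : (m + 2) * (y2 ^ 2 + y1 ^ 2) ≤ m * F ^ 2 := by
    nlinarith [h1, mul_nonneg (show (0:ℝ) ≤ m + 2 by linarith)
      (show (0:ℝ) ≤ x1 ^ 2 + x2 ^ 2 by positivity)]
  nlinarith [hstep, mul_le_mul_of_nonneg_left hstep (show (0:ℝ) ≤ m + 3 by linarith),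
    sq_nonneg F, mul_nonneg hm0 (sq_nonneg F)]

lemma up_scalar {G F m cc : ℝ} (hG0 : 0 ≤ G) (hF0 : 0 ≤ F) (hcc0 : 0 ≤ cc) (hm3 : 0 < m + 3)
    (hcc_sq : cc ^ 2 = (m + 1) / (m + 3))
    (hcore : (m + 3) * G ^ 2 ≤ (m + 1) * F ^ 2) : G ≤ cc * F := by
  have hsq : G ^ 2 ≤ (cc * F) ^ 2 := by
    rw [mul_pow, hcc_sq, div_mul_eq_mul_div, le_div_iff₀ hm3]
    nlinarith [hcore]
  have h := Real.sqrt_le_sqrt hsq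
  rwa [Real.sqrt_sq hG0, Real.sqrt_sq (mul_nonneg hcc0 hF0)] at h

lemma low_scalar {G G' F cc : ℝ} (htri : F ≤ G + G') (hup : G' ≤ cc * F) :
    (1 - cc) * F ≤ G := by nlinarith

lemma sq_bound_of_sqrt {x y a : ℝ}
    (h : Real.sqrt (x ^ 2 + y ^ 2) ≤ a * x) : x ^ 2 + y ^ 2 ≤ a ^ 2 * x ^ 2 := by
  calc x ^ 2 + y ^ 2 = (Real.sqrt (x ^ 2 + y ^ 2)) ^ 2 := (Real.sq_sqrt (by positivity)).symm
    _ ≤ (a * x) ^ 2 := pow_le_pow_left₀ (Real.sqrt_nonneg _) h 2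
    _ = a ^ 2 * x ^ 2 := by ring

lemma tail_bound {W : Type u} [NormedAddCommGroup W] [NormedSpace ℝ W] [CompleteSpace W]
    (Ah : W →L[ℝ] W) (a c : ℝ) (hc0 : 0 ≤ c) (hc1 : c < 1)
    (h : ∀ n : ℕ, ‖Ah ^ n‖ ≤ a * c ^ n) :
    ∃ Th : W →L[ℝ] W, ∀ N : ℕ,
      ‖(∑ ℓ ∈ Finset.range N, Ah ^ ℓ) - Th‖ ≤ a * c ^ N * (1 - c)⁻¹ := by
  have hsum : Summable (fun n : ℕ => Ah ^ n) :=
    Summable.of_norm_bounded ((summable_geometric_of_lt_one hc0 hc1).mul_left a) h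
  refine ⟨∑' n : ℕ, Ah ^ n, ?_⟩
  intro N
  have h0 : (∑ ℓ ∈ Finset.range N, Ah ^ ℓ) + ∑' i : ℕ, Ah ^ (i + N) = ∑' n : ℕ, Ah ^ n :=
    Summable.sum_add_tsum_nat_add N hsum
  have h1 : (∑ ℓ ∈ Finset.range N, Ah ^ ℓ) - (∑' n : ℕ, Ah ^ n) = -∑' i : ℕ, Ah ^ (i + N) := by
    rw [← h0]; abel
  rw [h1, norm_neg]
  have hg : HasSum (fun i : ℕ => a * c ^ N * c ^ i) (a * c ^ N * (1 - c)⁻¹) :=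
    (hasSum_geometric_of_lt_one hc0 hc1).mul_left _
  exact tsum_of_norm_bounded (f := fun i : ℕ => Ah ^ (i + N)) hg (fun i => by
    calc ‖Ah ^ (i + N)‖ ≤ a * c ^ (i + N) := h _
      _ = a * c ^ N * c ^ i := by rw [pow_add]; ring)

section Series
variable {Hi : Type u} {He : Type v} {B : Type w}
  [NormedAddCommGroup Hi] [InnerProductSpace ℝ Hi]
  [NormedAddCommGroup He] [InnerProductSpace ℝ He]
  [AddCommGroup B] [Module ℝ B]
  (Tri : Hi →ₗ[ℝ] B) (Tre : He →ₗ[ℝ] B)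

set_option maxHeartbeats 1000000 in
set_option synthInstance.maxHeartbeats 400000 in
lemma neumann_aux [CompleteSpace Hi]
    (hTri : Function.Surjective Tri) (hTre : Function.Surjective Tre)
    (hKi : IsClosed ((LinearMap.ker Tri : Submodule ℝ Hi) : Set Hi))
    (eΩ : Hi →ₗ[ℝ] He)
    (heΩ : ∀ u : Hi, eΩ u ∈ (LinearMap.ker Tre)ᗮ ∧ Tre (eΩ u) = Tri u)
    (a : ℝ) (ha0 : 0 ≤ a)
    (ha : ∀ u : Hi, Real.sqrt (‖u‖ ^ 2 + ‖eΩ u‖ ^ 2) ≤ a * ‖u‖)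
    (A : Module.End ℝ B) (c : ℝ) (hc0 : 0 ≤ c) (hc1 : c < 1)
    (hA : ∀ f : B, traceNormV Tri Tre (A f) ≤ c * traceNormV Tri Tre f) :
    ∃ T : B →ₗ[ℝ] B,
      Tendsto (fun N : ℕ => opNormV Tri Tre ((∑ ℓ ∈ Finset.range N, A ^ ℓ) - T))
        atTop (nhds 0) := by
  classical
  haveI : CompleteSpace ((LinearMap.ker Tri)ᗮ : Submodule ℝ Hi) :=
    (Submodule.isClosed_orthogonal _).completeSpace_coe
  haveI : CompleteSpace (LinearMap.ker Tri : Submodule ℝ Hi) := hKi.completeSpace_coe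
  set V : Submodule ℝ Hi := (LinearMap.ker Tri)ᗮ with hV
  set ψ : V →ₗ[ℝ] B := Tri ∘ₗ V.subtype with hψdef
  have hψ_apply : ∀ u : V, ψ u = Tri u := fun u => rfl
  have hψinj : Function.Injective ψ := by
    intro x y hxy
    have hz : ψ (x - y) = 0 := by rw [map_sub, hxy, sub_self]
    have hker : ((x - y : V) : Hi) ∈ LinearMap.ker Tri := hz
    have hmem : ((x - y : V) : Hi) ∈ V := (x - y).2
    have h1 : ⟪((x - y : V) : Hi), ((x - y : V) : Hi)⟫ = 0 :=
      (Submodule.mem_orthogonal _ _).mp hmem _ hker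
    have h2 : ((x - y : V) : Hi) = 0 := inner_self_eq_zero.mp h1
    have h3 : (x - y : V) = 0 := Subtype.ext h2
    exact sub_eq_zero.mp h3
  have hψsurj : Function.Surjective ψ := by
    intro f
    obtain ⟨u0, hu0⟩ := hTri f
    refine ⟨⟨u0 - (Submodule.orthogonalProjectionOnto (LinearMap.ker Tri) u0 : Hi),
      Submodule.sub_starProjection_mem_orthogonal u0⟩, ?_⟩
    have hker : Tri ((Submodule.orthogonalProjectionOnto (LinearMap.ker Tri) u0 : Hi)) = 0 :=
      (Submodule.orthogonalProjectionOnto (LinearMap.ker Tri) u0).2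
    show Tri (u0 - (Submodule.orthogonalProjectionOnto (LinearMap.ker Tri) u0 : Hi)) = f
    rw [map_sub, hker, sub_zero, hu0]
  set e : V ≃ₗ[ℝ] B := LinearEquiv.ofBijective ψ ⟨hψinj, hψsurj⟩ with he
  have he_apply : ∀ u : V, e u = ψ u := fun u => rfl
  have heψ : ∀ u : V, e.symm (ψ u) = u := by
    intro u; rw [← he_apply]; exact e.symm_apply_apply u
  have hψe : ∀ f : B, ψ (e.symm f) = f := by
    intro f; rw [← he_apply]; exact e.apply_symm_apply f
  have hφ_le : ∀ f : B, ‖(e.symm f : Hi)‖ ≤ traceNormV Tri Tre f := by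
    intro f
    obtain ⟨v0, hv0⟩ := hTre f
    refine le_csInf ⟨_, (e.symm f : Hi), v0, hψe f, hv0, rfl⟩ ?_
    rintro r ⟨u', v', hu1, hv1, rfl⟩
    have h1 : ‖(e.symm f : Hi)‖ ^ 2 ≤ ‖u'‖ ^ 2 :=
      norm_min Tri (e.symm f).2 ((hψe f).trans hu1.symm)
    calc ‖(e.symm f : Hi)‖ = Real.sqrt (‖(e.symm f : Hi)‖ ^ 2) :=
          (Real.sqrt_sq (norm_nonneg _)).symm
      _ ≤ Real.sqrt (‖u'‖ ^ 2 + ‖v'‖ ^ 2) := Real.sqrt_le_sqrt (by nlinarith [sq_nonneg ‖v'‖])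
  have hψ_le : ∀ u : V, traceNormV Tri Tre (ψ u) ≤ a * ‖u‖ := by
    intro u
    calc traceNormV Tri Tre (ψ u) ≤ Real.sqrt (‖(u : Hi)‖ ^ 2 + ‖eΩ u‖ ^ 2) :=
          traceNormV_le Tri Tre _ u (eΩ u) rfl (heΩ u).2
      _ ≤ a * ‖(u : Hi)‖ := ha u
  have hAn : ∀ (n : ℕ) (f : B), traceNormV Tri Tre ((A ^ n) f) ≤ c ^ n * traceNormV Tri Tre f := by
    intro n
    induction n with
    | zero => intro f; simp
    | succ n ih =>
      intro f
      have h1 : (A ^ (n + 1)) f = (A ^ n) (A f) := by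
        rw [pow_succ]; rfl
      rw [h1]
      calc traceNormV Tri Tre ((A ^ n) (A f)) ≤ c ^ n * traceNormV Tri Tre (A f) := ih (A f)
        _ ≤ c ^ n * (c * traceNormV Tri Tre f) :=
            mul_le_mul_of_nonneg_left (hA f) (by positivity)
        _ = c ^ (n + 1) * traceNormV Tri Tre f := by ring
  set Alin : V →ₗ[ℝ] V := e.symm.toLinearMap ∘ₗ (A ∘ₗ ψ) with hAlin
  have hAbd : ∀ u : V, ‖Alin u‖ ≤ a * c * ‖u‖ := by
    intro u
    have h0 : ‖Alin u‖ = ‖(e.symm (A (ψ u)) : Hi)‖ := rfl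
    rw [h0]
    calc ‖(e.symm (A (ψ u)) : Hi)‖ ≤ traceNormV Tri Tre (A (ψ u)) := hφ_le _
      _ ≤ c * traceNormV Tri Tre (ψ u) := hA _
      _ ≤ c * (a * ‖u‖) := mul_le_mul_of_nonneg_left (hψ_le u) hc0
      _ = a * c * ‖u‖ := by ring
  set Ahat : V →L[ℝ] V := Alin.mkContinuous (a * c) hAbd with hAhat
  have hAhat_apply : ∀ u : V, Ahat u = e.symm (A (ψ u)) := fun u => rfl
  have hpow : ∀ (n : ℕ) (u : V), (Ahat ^ n) u = e.symm ((A ^ n) (ψ u)) := by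
    intro n
    induction n with
    | zero => intro u; simp [heψ u]
    | succ n ih =>
      intro u
      have h1 : (Ahat ^ (n + 1)) u = (Ahat ^ n) (Ahat u) := by
        rw [pow_succ]; rfl
      rw [h1, ih, hAhat_apply, hψe, show (A ^ n) (A (ψ u)) = (A ^ (n+1)) (ψ u) by
        rw [pow_succ]; rfl]
  have hAn_norm : ∀ n : ℕ, ‖Ahat ^ n‖ ≤ a * c ^ n := by
    intro n
    refine ContinuousLinearMap.opNorm_le_bound _ (by positivity) ?_
    intro u
    rw [hpow]
    have h0 : ‖(e.symm ((A ^ n) (ψ u)) : V)‖ = ‖(e.symm ((A ^ n) (ψ u)) : Hi)‖ := rfl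
    rw [h0]
    calc ‖(e.symm ((A ^ n) (ψ u)) : Hi)‖ ≤ traceNormV Tri Tre ((A ^ n) (ψ u)) := hφ_le _
      _ ≤ c ^ n * traceNormV Tri Tre (ψ u) := hAn n _
      _ ≤ c ^ n * (a * ‖u‖) := mul_le_mul_of_nonneg_left (hψ_le u) (by positivity)
      _ = a * c ^ n * ‖u‖ := by ring
  obtain ⟨That, htail⟩ := tail_bound Ahat a c hc0 hc1 hAn_norm
  set T : B →ₗ[ℝ] B := ψ ∘ₗ (((That : V →ₗ[ℝ] V)) ∘ₗ e.symm.toLinearMap) with hT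
  refine ⟨T, ?_⟩
  have hinv : (0:ℝ) ≤ (1 - c)⁻¹ := inv_nonneg.mpr (by linarith)
  have hCN : ∀ N : ℕ, 0 ≤ a * (a * c ^ N * (1 - c)⁻¹) := fun N =>
    mul_nonneg ha0 (mul_nonneg (mul_nonneg ha0 (pow_nonneg hc0 N)) hinv)
  have hople : ∀ N : ℕ, opNormV Tri Tre ((∑ ℓ ∈ Finset.range N, A ^ ℓ) - T)
      ≤ a * (a * c ^ N * (1 - c)⁻¹) := by
    intro N
    refine csInf_le ⟨0, fun x hx => hx.1⟩ ⟨hCN N, ?_⟩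
    intro f
    have key : ((∑ ℓ ∈ Finset.range N, A ^ ℓ) - T) f
        = ψ (((∑ ℓ ∈ Finset.range N, Ahat ^ ℓ) - That) (e.symm f)) := by
      rw [LinearMap.sub_apply, ContinuousLinearMap.sub_apply, map_sub]
      congr 1
      rw [LinearMap.sum_apply, ContinuousLinearMap.coe_sum', Finset.sum_apply, map_sum]
      refine Finset.sum_congr rfl ?_
      intro ℓ _
      rw [hpow, hψe, hψe]
    rw [key]
    calc traceNormV Tri Tre (ψ (((∑ ℓ ∈ Finset.range N, Ahat ^ ℓ) - That) (e.symm f)))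
        ≤ a * ‖((∑ ℓ ∈ Finset.range N, Ahat ^ ℓ) - That) (e.symm f)‖ := hψ_le _
      _ ≤ a * (‖(∑ ℓ ∈ Finset.range N, Ahat ^ ℓ) - That‖ * ‖e.symm f‖) := by
          exact mul_le_mul_of_nonneg_left (ContinuousLinearMap.le_opNorm _ _) ha0
      _ ≤ a * ((a * c ^ N * (1 - c)⁻¹) * traceNormV Tri Tre f) := by
          refine mul_le_mul_of_nonneg_left ?_ ha0
          refine mul_le_mul ?_ (hφ_le f) (norm_nonneg _) (by
            exact mul_nonneg (mul_nonneg ha0 (pow_nonneg hc0 N)) hinv)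
          exact htail N
      _ = a * (a * c ^ N * (1 - c)⁻¹) * traceNormV Tri Tre f := by ring
  have hopnn : ∀ N : ℕ, 0 ≤ opNormV Tri Tre ((∑ ℓ ∈ Finset.range N, A ^ ℓ) - T) := by
    intro N
    exact Real.sInf_nonneg fun x hx => hx.1
  have hten : Tendsto (fun N : ℕ => a * (a * c ^ N * (1 - c)⁻¹)) atTop (nhds 0) := by
    have h1 : (fun N : ℕ => a * (a * c ^ N * (1 - c)⁻¹))
        = fun N : ℕ => (a * a * (1 - c)⁻¹) * c ^ N := by funext N; ring
    rw [h1]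
    have h2 := (tendsto_pow_atTop_nhds_zero_of_lt_one hc0 hc1).const_mul (a * a * (1 - c)⁻¹)
    simpa using h2
  exact squeeze_zero hopnn hople hten

end Series

/-- The contraction constant. -/
def cFun (a b : ℝ) : ℝ :=
  Real.sqrt ((max (a ^ 2) (b ^ 2) + 1) / (max (a ^ 2) (b ^ 2) + 3))

end Stmt17Aux

set_option maxHeartbeats 1600000 in
/-- For any two-sided admissible domain, the Neumann–Poincaré operator
`K_{∂Ω}` satisfies `(1−c)‖f‖_{V⁻¹} ≤ ‖(±½I + K_{∂Ω})f‖_{V⁻¹} ≤ c‖f‖_{V⁻¹}` for some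
`c ∈ (0,1)` depending only on the norms of the Dirichlet harmonic extension operators `Ė_Ω`
and `Ė_{Ω̄ᶜ}`; consequently the Neumann series `Σ_{ℓ≥0}(±½I + K_{∂Ω})^ℓ` converge in the
operator norm subordinate to `‖·‖_{V⁻¹}`. The domain data is abstracted as in the paper:
`Hi = Ḣ¹(Ω)`, `He = Ḣ¹(Ω̄ᶜ)`, trace maps `Tri, Tre` onto `B = 𝔅(∂Ω)` with closed kernels,
harmonic extension operators `eΩ, eΩc`, and `K` characterized by `K f = ½(tr_i + tr_e)(D f)`
where `D f` is the double layer potential (harmonic, trace jump `−f`, zero jump in weak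
normal derivative). -/
theorem stmt17 :
    ∃ c : ℝ → ℝ → ℝ,
      ∀ (Hi : Type u) (He : Type v) (B : Type w)
        [NormedAddCommGroup Hi] [InnerProductSpace ℝ Hi] [CompleteSpace Hi]
        [NormedAddCommGroup He] [InnerProductSpace ℝ He] [CompleteSpace He]
        [AddCommGroup B] [Module ℝ B]
        (Tri : Hi →ₗ[ℝ] B) (Tre : He →ₗ[ℝ] B),
        Function.Surjective Tri → Function.Surjective Tre →
        IsClosed ((LinearMap.ker Tri : Submodule ℝ Hi) : Set Hi) →
        IsClosed ((LinearMap.ker Tre : Submodule ℝ He) : Set He) →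
        ∀ eΩ : Hi →ₗ[ℝ] He,
          (∀ u : Hi, eΩ u ∈ (LinearMap.ker Tre)ᗮ ∧ Tre (eΩ u) = Tri u) →
          (∃ C : ℝ, 0 ≤ C ∧ ∀ u : Hi, Real.sqrt (‖u‖ ^ 2 + ‖eΩ u‖ ^ 2) ≤ C * ‖u‖) →
        ∀ eΩc : He →ₗ[ℝ] Hi,
          (∀ v : He, eΩc v ∈ (LinearMap.ker Tri)ᗮ ∧ Tri (eΩc v) = Tre v) →
          (∃ C : ℝ, 0 ≤ C ∧ ∀ v : He, Real.sqrt (‖v‖ ^ 2 + ‖eΩc v‖ ^ 2) ≤ C * ‖v‖) →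
        ∀ K : B →ₗ[ℝ] B,
          (∀ f : B, ∃ u : Hi × He,
            u.1 ∈ (LinearMap.ker Tri)ᗮ ∧ u.2 ∈ (LinearMap.ker Tre)ᗮ ∧
            Tri u.1 - Tre u.2 = -f ∧
            (∀ (vi : Hi) (ve : He), Tri vi = Tre ve → ⟪u.1, vi⟫ + ⟪u.2, ve⟫ = 0) ∧
            K f = ((1 : ℝ) / 2) • (Tri u.1 + Tre u.2)) →
          (0 < c (extNorm eΩ) (extNorm eΩc) ∧ c (extNorm eΩ) (extNorm eΩc) < 1 ∧
          (∀ f : B,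
            (1 - c (extNorm eΩ) (extNorm eΩc)) * traceNormV Tri Tre f ≤
              traceNormV Tri Tre (((1 : ℝ) / 2) • f + K f) ∧
            traceNormV Tri Tre (((1 : ℝ) / 2) • f + K f) ≤
              c (extNorm eΩ) (extNorm eΩc) * traceNormV Tri Tre f) ∧
          (∀ f : B,
            (1 - c (extNorm eΩ) (extNorm eΩc)) * traceNormV Tri Tre f ≤
              traceNormV Tri Tre (-(((1 : ℝ) / 2) • f) + K f) ∧
            traceNormV Tri Tre (-(((1 : ℝ) / 2) • f) + K f) ≤
              c (extNorm eΩ) (extNorm eΩc) * traceNormV Tri Tre f) ∧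
          (∃ T : B →ₗ[ℝ] B,
            Tendsto (fun N : ℕ => opNormV Tri Tre
              ((∑ ℓ ∈ Finset.range N,
                (((1 : ℝ) / 2) • (LinearMap.id : Module.End ℝ B) + K) ^ ℓ) - T))
              atTop (nhds 0)) ∧
          (∃ T : B →ₗ[ℝ] B,
            Tendsto (fun N : ℕ => opNormV Tri Tre
              ((∑ ℓ ∈ Finset.range N,
                ((-(1 : ℝ) / 2) • (LinearMap.id : Module.End ℝ B) + K) ^ ℓ) - T))
              atTop (nhds 0))) := by
  classical
  refine ⟨Stmt17Aux.cFun, ?_⟩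
  intro Hi He B _ _ _ _ _ _ _ _ Tri Tre hTriSurj hTreSurj hKiClosed hKeClosed
    eΩ heΩ heΩBdd eΩc heΩc heΩcBdd K hK
  open Stmt17Aux in
  obtain ⟨ha0, haSpec⟩ := Stmt17Aux.extNorm_spec eΩ heΩBdd
  obtain ⟨hb0, hbSpec⟩ := Stmt17Aux.extNorm_spec eΩc heΩcBdd
  set a := extNorm eΩ with ha_def
  set b := extNorm eΩc with hb_def
  set m := max (a ^ 2) (b ^ 2) with hm_def
  have hm0 : (0:ℝ) ≤ m := le_trans (sq_nonneg a) (le_max_left _ _)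
  set cc := Stmt17Aux.cFun a b with hcc_def
  have hcc_eq : cc = Real.sqrt ((m + 1) / (m + 3)) := rfl
  have hratio_pos : 0 < (m + 1) / (m + 3) := div_pos (by linarith) (by linarith)
  have hcc_pos : 0 < cc := by rw [hcc_eq]; exact Real.sqrt_pos.mpr hratio_pos
  have hcc0 : 0 ≤ cc := le_of_lt hcc_pos
  have hcc_lt1 : cc < 1 := by
    have h := Real.sqrt_lt_sqrt (le_of_lt hratio_pos)
      (by rw [div_lt_one (by linarith : (0:ℝ) < m + 3)]; linarith : (m + 1) / (m + 3) < 1)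
    rw [Real.sqrt_one] at h
    rw [hcc_eq]; exact h
  have hcc_sq : cc ^ 2 = (m + 1) / (m + 3) := by
    rw [hcc_eq]; exact Real.sq_sqrt (le_of_lt hratio_pos)
  have hm3 : (0:ℝ) < m + 3 := by linarith
  -- the main contraction estimates
  have main : ∀ f : B,
      (((1 - cc) * traceNormV Tri Tre f ≤ traceNormV Tri Tre (((1:ℝ)/2) • f + K f)) ∧
        (traceNormV Tri Tre (((1:ℝ)/2) • f + K f) ≤ cc * traceNormV Tri Tre f)) ∧
      (((1 - cc) * traceNormV Tri Tre f ≤ traceNormV Tri Tre (-(((1:ℝ)/2) • f) + K f)) ∧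
        (traceNormV Tri Tre (-(((1:ℝ)/2) • f) + K f) ≤ cc * traceNormV Tri Tre f)) := by
    intro f
    obtain ⟨⟨u₁, u₂⟩, h1, h2, h3, h4, h5⟩ := hK f
    simp only at h1 h2 h3 h4 h5
    have hf : f = Tre u₂ - Tri u₁ := by
      have h := congrArg Neg.neg h3
      rw [neg_neg] at h
      rw [← h]; abel
    have hgp : ((1:ℝ)/2) • f + K f = Tre u₂ := by
      rw [h5, hf]; module
    have hgm : -(((1:ℝ)/2) • f) + K f = Tri u₁ := by
      rw [h5, hf]; module
    have o1 : ⟪u₁, u₁⟫ + ⟪u₂, eΩ u₁⟫ = 0 := h4 u₁ (eΩ u₁) (heΩ u₁).2.symm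
    have o2 : ⟪u₁, eΩc u₂⟫ + ⟪u₂, u₂⟫ = 0 := h4 (eΩc u₂) u₂ (heΩc u₂).2
    set x1 := ‖u₁‖ with hx1
    set x2 := ‖eΩ u₁‖ with hx2
    set y1 := ‖u₂‖ with hy1
    set y2 := ‖eΩc u₂‖ with hy2
    have hpsq : ‖eΩc u₂ - u₁‖ ^ 2 = y2 ^ 2 + 2 * y1 ^ 2 + x1 ^ 2 := by
      have hn := norm_sub_sq_real (eΩc u₂) u₁
      have hii := real_inner_self_eq_norm_sq u₂
      have hcomm : ⟪u₁, eΩc u₂⟫ = ⟪eΩc u₂, u₁⟫ := real_inner_comm (eΩc u₂) u₁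
      simp only [← hx1, ← hx2, ← hy1, ← hy2] at hn hii
      have hi : ⟪eΩc u₂, u₁⟫ = -(y1 ^ 2) := by linear_combination o2 - hii - hcomm
      rw [hn, hi]; ring
    have hqsq : ‖u₂ - eΩ u₁‖ ^ 2 = y1 ^ 2 + 2 * x1 ^ 2 + x2 ^ 2 := by
      have hn := norm_sub_sq_real u₂ (eΩ u₁)
      have hii := real_inner_self_eq_norm_sq u₁
      simp only [← hx1, ← hx2, ← hy1, ← hy2] at hn hii
      have hi : ⟪u₂, eΩ u₁⟫ = -(x1 ^ 2) := by linear_combination o1 - hii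
      rw [hn, hi]; ring
    have hFeq : traceNormV Tri Tre f = Real.sqrt (‖eΩc u₂ - u₁‖ ^ 2 + ‖u₂ - eΩ u₁‖ ^ 2) :=
      Stmt17Aux.traceNormV_eq Tri Tre f _ _
        (Submodule.sub_mem _ (heΩc u₂).1 h1) (Submodule.sub_mem _ h2 (heΩ u₁).1)
        (by rw [map_sub, (heΩc u₂).2]; exact hf.symm)
        (by rw [map_sub, (heΩ u₁).2]; exact hf.symm)
    have hGpeq : traceNormV Tri Tre (Tre u₂) = Real.sqrt (y2 ^ 2 + y1 ^ 2) :=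
      Stmt17Aux.traceNormV_eq Tri Tre (Tre u₂) (eΩc u₂) u₂ (heΩc u₂).1 h2 (heΩc u₂).2 rfl
    have hGmeq : traceNormV Tri Tre (Tri u₁) = Real.sqrt (x1 ^ 2 + x2 ^ 2) :=
      Stmt17Aux.traceNormV_eq Tri Tre (Tri u₁) u₁ (eΩ u₁) h1 (heΩ u₁).1 rfl (heΩ u₁).2
    set F := traceNormV Tri Tre f with hF
    set Gp := traceNormV Tri Tre (Tre u₂) with hGp
    set Gm := traceNormV Tri Tre (Tri u₁) with hGm
    have hF0 : 0 ≤ F := Stmt17Aux.traceNormV_nonneg Tri Tre f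
    have hGp0 : 0 ≤ Gp := Stmt17Aux.traceNormV_nonneg Tri Tre _
    have hGm0 : 0 ≤ Gm := Stmt17Aux.traceNormV_nonneg Tri Tre _
    have hFsq : F ^ 2 = x2 ^ 2 + y2 ^ 2 + 3 * x1 ^ 2 + 3 * y1 ^ 2 := by
      rw [hFeq, Real.sq_sqrt (by positivity), hpsq, hqsq]; ring
    have hGpsq : Gp ^ 2 = y2 ^ 2 + y1 ^ 2 := by
      rw [hGpeq, Real.sq_sqrt (by positivity)]
    have hGmsq : Gm ^ 2 = x1 ^ 2 + x2 ^ 2 := by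
      rw [hGmeq, Real.sq_sqrt (by positivity)]
    have hax : x1 ^ 2 + x2 ^ 2 ≤ a ^ 2 * x1 ^ 2 := Stmt17Aux.sq_bound_of_sqrt (haSpec u₁)
    have hby : y1 ^ 2 + y2 ^ 2 ≤ b ^ 2 * y1 ^ 2 := Stmt17Aux.sq_bound_of_sqrt (hbSpec u₂)
    have hma : a ^ 2 ≤ m := le_max_left _ _
    have hmb : b ^ 2 ≤ m := le_max_right _ _
    have hFle : F ^ 2 ≤ (m + 2) * (x1 ^ 2 + y1 ^ 2) :=
      Stmt17Aux.hFle_scalar hma hmb hax hby hFsq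
    have hcore_p : (m + 3) * Gp ^ 2 ≤ (m + 1) * F ^ 2 := by
      rw [hGpsq]; exact Stmt17Aux.core_ineq hm0 hFsq hFle
    have hcore_m : (m + 3) * Gm ^ 2 ≤ (m + 1) * F ^ 2 := by
      rw [hGmsq]
      have h := Stmt17Aux.core_ineq (x1 := y1) (x2 := y2) (y1 := x1) (y2 := x2) (m := m)
        (F := F) hm0 (by linarith [hFsq]) (by linarith [hFle])
      linarith [h]
    have hupGp : Gp ≤ cc * F := Stmt17Aux.up_scalar hGp0 hF0 hcc0 hm3 hcc_sq hcore_p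
    have hupGm : Gm ≤ cc * F := Stmt17Aux.up_scalar hGm0 hF0 hcc0 hm3 hcc_sq hcore_m
    have htri : F ≤ Gp + Gm := by
      rw [hFeq, hGpeq, hGmeq]
      calc Real.sqrt (‖eΩc u₂ - u₁‖ ^ 2 + ‖u₂ - eΩ u₁‖ ^ 2)
          ≤ Real.sqrt ((y2 + x1) ^ 2 + (y1 + x2) ^ 2) :=
            Real.sqrt_le_sqrt (add_le_add
              (pow_le_pow_left₀ (norm_nonneg _) (norm_sub_le _ _) 2)
              (pow_le_pow_left₀ (norm_nonneg _) (norm_sub_le _ _) 2))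
        _ ≤ Real.sqrt (y2 ^ 2 + y1 ^ 2) + Real.sqrt (x1 ^ 2 + x2 ^ 2) :=
            Stmt17Aux.l2tri (norm_nonneg _) (norm_nonneg _) (norm_nonneg _) (norm_nonneg _)
    have hlowGp : (1 - cc) * F ≤ Gp := Stmt17Aux.low_scalar htri hupGm
    have hlowGm : (1 - cc) * F ≤ Gm := by
      have htri' : F ≤ Gm + Gp := by linarith [htri]
      exact Stmt17Aux.low_scalar htri' hupGp
    refine ⟨⟨?_, ?_⟩, ?_, ?_⟩
    · rw [hgp]; exact hlowGp
    · rw [hgp]; exact hupGp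
    · rw [hgm]; exact hlowGm
    · rw [hgm]; exact hupGm
  refine ⟨hcc_pos, hcc_lt1, fun f => (main f).1, fun f => (main f).2, ?_, ?_⟩
  · refine Stmt17Aux.neumann_aux Tri Tre hTriSurj hTreSurj hKiClosed eΩ heΩ a ha0 haSpec
      (((1 : ℝ) / 2) • (LinearMap.id : Module.End ℝ B) + K) cc hcc0 hcc_lt1 ?_
    intro f
    have happ : (((1:ℝ)/2) • (LinearMap.id : Module.End ℝ B) + K) f = ((1:ℝ)/2) • f + K f := by
      simp [LinearMap.add_apply, LinearMap.smul_apply]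
    rw [happ]
    exact (main f).1.2
  · refine Stmt17Aux.neumann_aux Tri Tre hTriSurj hTreSurj hKiClosed eΩ heΩ a ha0 haSpec
      ((-(1 : ℝ) / 2) • (LinearMap.id : Module.End ℝ B) + K) cc hcc0 hcc_lt1 ?_
    intro f
    have happ : ((-(1:ℝ)/2) • (LinearMap.id : Module.End ℝ B) + K) f
        = -(((1:ℝ)/2) • f) + K f := by
      simp [LinearMap.add_apply, LinearMap.smul_apply, neg_div, neg_smul]
    rw [happ]
    exact (main f).2.2

end
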